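/- If the matrices A^i ∈ Mat(D₁×D₂) form an injective tensor, and B^i ∈ Mat(D₁×D₂) are matrices such that A^i = B^i Z for all i and A^i = W B^i for all i, where Z ∈ Mat(D₂), W ∈ Mat(D₁), and B is injective, then Z = λ·Id, W = λ·Id for some scalar λ, and hence A^i = λ B^i for all i. -/

import Mathlib

open Matrix

/-- a two-sided gauge acting trivially between two injective tensors is a
scalar. -/
theorem two_sided_gauge_is_scalar (d D₁ D₂ : ℕ) (hD₁ : 0 < D₁) (hD₂ : 0 < D₂)
    (A B : Fin d → Matrix (Fin D₁) (Fin D₂) ℂ)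
    (hA : Function.Injective fun X : Matrix (Fin D₁) (Fin D₂) ℂ =>
      fun i : Fin d => (A i * Xᵀ).trace)
    (hB : Function.Injective fun X : Matrix (Fin D₁) (Fin D₂) ℂ =>
      fun i : Fin d => (B i * Xᵀ).trace)
    (Z : Matrix (Fin D₂) (Fin D₂) ℂ) (W : Matrix (Fin D₁) (Fin D₁) ℂ)
    (h₁ : ∀ i, A i = B i * Z) (h₂ : ∀ i, A i = W * B i) :
    ∃ lam : ℂ, Z = lam • (1 : Matrix (Fin D₂) (Fin D₂) ℂ) ∧
      W = lam • (1 : Matrix (Fin D₁) (Fin D₁) ℂ) ∧ ∀ i, A i = lam • B i := by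
  have hBZ : ∀ i, B i * Z = W * B i := fun i => (h₁ i).symm.trans (h₂ i)
  have key : ∀ Y : Matrix (Fin D₁) (Fin D₂) ℂ, Y * Zᵀ = Wᵀ * Y := by
    intro Y
    apply hB
    funext i
    simp only
    calc (B i * (Y * Zᵀ)ᵀ).trace
        = (B i * Z * Yᵀ).trace := by
          rw [transpose_mul, transpose_transpose, Matrix.mul_assoc]
      _ = (W * (B i * Yᵀ)).trace := by rw [hBZ i, Matrix.mul_assoc]
      _ = (B i * Yᵀ * W).trace := by rw [trace_mul_comm]
      _ = (B i * (Wᵀ * Y)ᵀ).trace := by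
          rw [transpose_mul, transpose_transpose, Matrix.mul_assoc]
  have entry : ∀ (k p : Fin D₁) (l q : Fin D₂),
      (if p = k then Z q l else 0) = (if q = l then W k p else 0) := by
    intro k p l q
    have h := congrFun (congrFun (key (Matrix.single k l 1)) p) q
    simp only [mul_apply, Matrix.single, of_apply, transpose_apply, ite_and,
      mul_ite, ite_mul, mul_one, one_mul, mul_zero, zero_mul,
      Finset.sum_ite_eq, Finset.sum_ite_eq', Finset.mem_univ, if_true] at h
    by_cases hpk : p = k <;> by_cases hql : q = l <;>
      simp_all [eq_comm]
  set k0 : Fin D₁ := ⟨0, hD₁⟩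
  set l0 : Fin D₂ := ⟨0, hD₂⟩
  refine ⟨W k0 k0, ?_, ?_, ?_⟩
  · ext q l
    have h := entry k0 k0 l q
    simp only [if_true, if_pos rfl] at h
    rw [h]
    by_cases hql : q = l <;> simp [hql, Matrix.one_apply]
  · ext k p
    have h := (entry k p l0 l0).symm
    simp only [if_true, if_pos rfl] at h
    have h2 := entry k0 k0 l0 l0
    simp only [if_true, if_pos rfl] at h2
    rw [h, ← h2]
    rcases eq_or_ne p k with hpk | hpk
    · simp [hpk, Matrix.one_apply]
    · simp [hpk, hpk.symm, Matrix.one_apply]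
  · intro i
    have hZ : Z = W k0 k0 • (1 : Matrix (Fin D₂) (Fin D₂) ℂ) := by
      ext q l
      have h := entry k0 k0 l q
      simp only [if_true, if_pos rfl] at h
      rw [h]
      by_cases hql : q = l <;> simp [hql, Matrix.one_apply]
    rw [h₁ i, hZ, Matrix.mul_smul, Matrix.mul_one]
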